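/- Let b, c : ℝ → ℝ be smooth, let m₁, m₂, m₃ ∈ ℝ satisfy m₁ = m₃² − m₂², define m(y) = m₁·y + m₂·B(y) + m₃·C(y), and set Q(t,x) = exp(m₂t + m₃x). Let u : ℝ² → ℝ be a smooth solution of F[u] = 0. Define the symmetry-generated current Ψᵗ = −Q·∂ₜ²u − (b(u) − m₂)·Q·∂ₜu, Ψˣ = Q·∂ₜ∂ₓu − (c(u) + m₃)·Q·∂ₜu, the multiplier current Ĉᵗ = Q·(∂ₜu − m₂·u + B(u)), Ĉˣ = Q·(m₃·u − ∂ₓu + C(u)), and θ = Q·(m₃·u + C(u) − ∂ₓu). Then Ψᵗ = m₂·Ĉᵗ + ∂ₓθ and Ψˣ = m₂·Ĉˣ − ∂ₜθ on ℝ². (Thus the current generated by the time-translation symmetry and the adjoint-symmetry Q is locally equivalent to m₂ times the conserved current determined by the multiplier Q.) -/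

import Mathlib

noncomputable section

open Real

/-- Partial derivative in the first (time) variable. -/
def Dt (u : ℝ → ℝ → ℝ) : ℝ → ℝ → ℝ := fun t x => deriv (fun s => u s x) t

/-- Partial derivative in the second (space) variable. -/
def Dx (u : ℝ → ℝ → ℝ) : ℝ → ℝ → ℝ := fun t x => deriv (fun s => u t s) x

/-- Smoothness (C^∞) of a function of two real variables. -/
def Smooth2 (u : ℝ → ℝ → ℝ) : Prop := ContDiff ℝ (⊤ : ℕ∞) (fun p : ℝ × ℝ => u p.1 p.2)
/-- The semilinear wave operator F[u] = ∂ₜ²u − ∂ₓ²u + b(u)∂ₜu + c(u)∂ₓu + m(u). -/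
def Fop (b c m : ℝ → ℝ) (u : ℝ → ℝ → ℝ) : ℝ → ℝ → ℝ := fun t x =>
  Dt (Dt u) t x - Dx (Dx u) t x + b (u t x) * Dt u t x + c (u t x) * Dx u t x + m (u t x)

/-- The adjoint linearized operator along u:
L*[u]q = ∂ₜ²q − ∂ₓ²q − b(u)∂ₜq − c(u)∂ₓq + m′(u)q. -/
def Lstar (b c m : ℝ → ℝ) (u q : ℝ → ℝ → ℝ) : ℝ → ℝ → ℝ := fun t x =>
  Dt (Dt q) t x - Dx (Dx q) t x - b (u t x) * Dt q t x - c (u t x) * Dx q t x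
    + deriv m (u t x) * q t x

lemma smooth2_hasDerivAt_x (u : ℝ → ℝ → ℝ) (hu : Smooth2 u) (t x : ℝ) :
    HasDerivAt (fun s => u t s) ((fderiv ℝ (fun p : ℝ × ℝ => u p.1 p.2) (t, x)) (0, 1)) x := by
  have hline : HasDerivAt (fun s : ℝ => ((t, s) : ℝ × ℝ)) ((0 : ℝ), (1 : ℝ)) x :=
    (hasDerivAt_const x t).prodMk (hasDerivAt_id x)
  exact ((hu.differentiable (by simp) (t, x)).hasFDerivAt).comp_hasDerivAt x hline

lemma smooth2_hasDerivAt_t (u : ℝ → ℝ → ℝ) (hu : Smooth2 u) (t x : ℝ) :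
    HasDerivAt (fun s => u s x) ((fderiv ℝ (fun p : ℝ × ℝ => u p.1 p.2) (t, x)) (1, 0)) t := by
  have hline : HasDerivAt (fun s : ℝ => ((s, x) : ℝ × ℝ)) ((1 : ℝ), (0 : ℝ)) t :=
    (hasDerivAt_id t).prodMk (hasDerivAt_const t x)
  exact ((hu.differentiable (by simp) (t, x)).hasFDerivAt).comp_hasDerivAt t hline

lemma Dx_eq (u : ℝ → ℝ → ℝ) (hu : Smooth2 u) (t x : ℝ) :
    Dx u t x = (fderiv ℝ (fun p : ℝ × ℝ => u p.1 p.2) (t, x)) (0, 1) :=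
  (smooth2_hasDerivAt_x u hu t x).deriv

lemma Dt_eq (u : ℝ → ℝ → ℝ) (hu : Smooth2 u) (t x : ℝ) :
    Dt u t x = (fderiv ℝ (fun p : ℝ × ℝ => u p.1 p.2) (t, x)) (1, 0) :=
  (smooth2_hasDerivAt_t u hu t x).deriv

lemma smooth2_Dx (u : ℝ → ℝ → ℝ) (hu : Smooth2 u) : Smooth2 (Dx u) := by
  have h : (fun p : ℝ × ℝ => Dx u p.1 p.2)
      = fun p : ℝ × ℝ => (fderiv ℝ (fun p : ℝ × ℝ => u p.1 p.2) p) (0, 1) := by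
    funext p; exact Dx_eq u hu p.1 p.2
  rw [Smooth2, h]
  exact (hu.fderiv_right (le_refl _)).clm_apply contDiff_const

lemma hasDerivAt_Dx_x (u : ℝ → ℝ → ℝ) (hu : Smooth2 u) (t x : ℝ) :
    HasDerivAt (fun s => u t s) (Dx u t x) x := by
  rw [Dx_eq u hu t x]; exact smooth2_hasDerivAt_x u hu t x

lemma hasDerivAt_Dt_t (u : ℝ → ℝ → ℝ) (hu : Smooth2 u) (t x : ℝ) :
    HasDerivAt (fun s => u s x) (Dt u t x) t := by
  rw [Dt_eq u hu t x]; exact smooth2_hasDerivAt_t u hu t x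

/-- On solutions, the current generated by the time-translation symmetry and
the adjoint-symmetry Q = exp(m₂t + m₃x) is locally equivalent to m₂ times the
conserved current determined by the multiplier Q. -/
theorem stmt_16
    (b c : ℝ → ℝ) (hb : ContDiff ℝ (⊤ : ℕ∞) b) (hc : ContDiff ℝ (⊤ : ℕ∞) c)
    (m₁ m₂ m₃ : ℝ) (hm₁ : m₁ = m₃ ^ 2 - m₂ ^ 2)
    (m B C : ℝ → ℝ)
    (hB : ∀ y, B y = ∫ s in (0:ℝ)..y, b s)
    (hC : ∀ y, C y = ∫ s in (0:ℝ)..y, c s)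
    (hmdef : ∀ y, m y = m₁ * y + m₂ * B y + m₃ * C y)
    (Q : ℝ → ℝ → ℝ) (hQdef : ∀ t x, Q t x = Real.exp (m₂ * t + m₃ * x))
    (u : ℝ → ℝ → ℝ) (hu : Smooth2 u) (hsol : ∀ t x, Fop b c m u t x = 0) :
    (∀ t x : ℝ,
      -(Q t x) * Dt (Dt u) t x - (b (u t x) - m₂) * Q t x * Dt u t x
        = m₂ * (Q t x * (Dt u t x - m₂ * u t x + B (u t x)))
          + Dx (fun t x => Q t x * (m₃ * u t x + C (u t x) - Dx u t x)) t x)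
    ∧ (∀ t x : ℝ,
      Q t x * Dt (Dx u) t x - (c (u t x) + m₃) * Q t x * Dt u t x
        = m₂ * (Q t x * (m₃ * u t x - Dx u t x + C (u t x)))
          - Dt (fun t x => Q t x * (m₃ * u t x + C (u t x) - Dx u t x)) t x) := by
  have hCder : ∀ y : ℝ, HasDerivAt C (c y) y := by
    intro y
    have h1 : HasDerivAt (fun z => ∫ s in (0:ℝ)..z, c s) (c y) y :=
      (hc.continuous.integral_hasStrictDerivAt 0 y).hasDerivAt
    have h2 : C = fun z => ∫ s in (0:ℝ)..z, c s := funext hC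
    rw [h2]; exact h1
  have hDxu := smooth2_Dx u hu
  constructor
  · intro t x
    have hQx : HasDerivAt (fun s => Q t s) (m₃ * Q t x) x := by
      have h1 : HasDerivAt (fun s : ℝ => m₂ * t + m₃ * s) m₃ x := by
        simpa using ((hasDerivAt_id x).const_mul m₃).const_add (m₂ * t)
      have h2 := h1.exp
      have h3 : (fun s => Q t s) = fun s => Real.exp (m₂ * t + m₃ * s) := funext (hQdef t)
      rw [h3, hQdef t x]; simpa [mul_comm] using h2
    have hux : HasDerivAt (fun s => u t s) (Dx u t x) x := hasDerivAt_Dx_x u hu t x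
    have hCu : HasDerivAt (fun s => C (u t s)) (c (u t x) * Dx u t x) x :=
      (hCder (u t x)).comp x hux
    have hDxx : HasDerivAt (fun s => Dx u t s) (Dx (Dx u) t x) x :=
      hasDerivAt_Dx_x (Dx u) hDxu t x
    have hθ : HasDerivAt (fun s => Q t s * (m₃ * u t s + C (u t s) - Dx u t s))
        (m₃ * Q t x * (m₃ * u t x + C (u t x) - Dx u t x)
          + Q t x * (m₃ * Dx u t x + c (u t x) * Dx u t x - Dx (Dx u) t x)) x :=
      hQx.mul (((hux.const_mul m₃).add hCu).sub hDxx)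
    have hDxθ : Dx (fun t x => Q t x * (m₃ * u t x + C (u t x) - Dx u t x)) t x
        = m₃ * Q t x * (m₃ * u t x + C (u t x) - Dx u t x)
          + Q t x * (m₃ * Dx u t x + c (u t x) * Dx u t x - Dx (Dx u) t x) := hθ.deriv
    have hs := hsol t x
    simp only [Fop, hmdef, hm₁] at hs
    rw [hDxθ]
    linear_combination (-(Q t x)) * hs
  · intro t x
    have hQt : HasDerivAt (fun s => Q s x) (m₂ * Q t x) t := by
      have h1 : HasDerivAt (fun s : ℝ => m₂ * s + m₃ * x) m₂ t := by
        simpa using ((hasDerivAt_id t).const_mul m₂).add_const (m₃ * x)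
      have h2 := h1.exp
      have h3 : (fun s => Q s x) = fun s => Real.exp (m₂ * s + m₃ * x) := by
        funext s; exact hQdef s x
      rw [h3, hQdef t x]; simpa [mul_comm] using h2
    have hut : HasDerivAt (fun s => u s x) (Dt u t x) t := hasDerivAt_Dt_t u hu t x
    have hCu : HasDerivAt (fun s => C (u s x)) (c (u t x) * Dt u t x) t :=
      (hCder (u t x)).comp t hut
    have hDxt : HasDerivAt (fun s => Dx u s x) (Dt (Dx u) t x) t :=
      hasDerivAt_Dt_t (Dx u) hDxu t x
    have hθ : HasDerivAt (fun s => Q s x * (m₃ * u s x + C (u s x) - Dx u s x))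
        (m₂ * Q t x * (m₃ * u t x + C (u t x) - Dx u t x)
          + Q t x * (m₃ * Dt u t x + c (u t x) * Dt u t x - Dt (Dx u) t x)) t :=
      hQt.mul (((hut.const_mul m₃).add hCu).sub hDxt)
    have hDtθ : Dt (fun t x => Q t x * (m₃ * u t x + C (u t x) - Dx u t x)) t x
        = m₂ * Q t x * (m₃ * u t x + C (u t x) - Dx u t x)
          + Q t x * (m₃ * Dt u t x + c (u t x) * Dt u t x - Dt (Dx u) t x) := hθ.deriv
    rw [hDtθ]
    ring
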